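/- arXiv:1404.7577 — 2 statements merged into one kernel-verified Lean document; each statement's English description precedes it below -/
import Mathlib

section
/- Let (Ω, 𝓕, P) be a probability space, T > 0, β > 0 and m a positive integer. Let y : [0,T] × Ω → ℝ^m and z : [0,T] × [0,T] × Ω → ℝ^m be measurable functions, and suppose that for almost every s ∈ [0,T] one has E ∫₀ˢ |z(s,t)|² dt ≤ E |y(s)|². Then ∫₀ᵀ e^{βt} E[ ∫ₜᵀ |y(s)|² ds + ( ∫ₜᵀ |z(s,t)| ds )² ] dt ≤ (2/β) ∫₀ᵀ e^{βt} E |y(t)|² dt. -/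
open MeasureTheory Set
open scoped ENNReal

lemma lintExp (c a b : ℝ) (hc : c ≠ 0) (hab : a ≤ b) :
    ∫⁻ t in Icc a b, ENNReal.ofReal (Real.exp (c * t)) =
      ENNReal.ofReal ((Real.exp (c * b) - Real.exp (c * a)) / c) := by
  rw [← ofReal_integral_eq_lintegral_ofReal]
  · congr 1
    rw [MeasureTheory.integral_Icc_eq_integral_Ioc, ← intervalIntegral.integral_of_le hab,
      intervalIntegral.integral_comp_mul_left _ hc, integral_exp]
    rw [smul_eq_mul]
    ring
  · exact (Real.continuous_exp.comp (continuous_const.mul continuous_id)).integrableOn_Icc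
  · exact Filter.Eventually.of_forall fun x => (Real.exp_pos _).le

lemma lintCS {α : Type*} [MeasurableSpace α] (μ : Measure α) (f g : α → ℝ≥0∞)
    (hf : AEMeasurable f μ) (hg : AEMeasurable g μ) :
    (∫⁻ x, f x * g x ∂μ) ^ 2 ≤ (∫⁻ x, f x ^ 2 ∂μ) * (∫⁻ x, g x ^ 2 ∂μ) := by
  have h := ENNReal.lintegral_mul_le_Lp_mul_Lq μ
    (Real.holderConjugate_iff_eq_conjExponent (by norm_num) |>.2 (by norm_num) :
      Real.HolderConjugate 2 2) hf hg
  calc (∫⁻ x, f x * g x ∂μ) ^ 2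
      ≤ ((∫⁻ a, f a ^ (2:ℝ) ∂μ) ^ (1/(2:ℝ)) * (∫⁻ a, g a ^ (2:ℝ) ∂μ) ^ (1/(2:ℝ))) ^ 2 :=
        pow_le_pow_left' h 2
    _ = (∫⁻ x, f x ^ 2 ∂μ) * (∫⁻ x, g x ^ 2 ∂μ) := by
        rw [mul_pow, ← ENNReal.rpow_natCast (_ ^ (1/(2:ℝ))) 2,
          ← ENNReal.rpow_natCast (_ ^ (1/(2:ℝ))) 2, ← ENNReal.rpow_mul, ← ENNReal.rpow_mul]
        norm_num

lemma restrictL {T : ℝ} (t : ℝ) (ht : 0 ≤ t) (f : ℝ → ℝ≥0∞) :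
    ∫⁻ s in Icc t T, f s = ∫⁻ s in Icc (0:ℝ) T, (if t ≤ s then f s else 0) := by
  have h1 : (fun s => if t ≤ s then f s else 0) = (Ici t).indicator f := by
    ext s; simp [Set.indicator_apply, mem_Ici]
  rw [h1, lintegral_indicator measurableSet_Ici,
    Measure.restrict_restrict measurableSet_Ici]
  have h2 : Ici t ∩ Icc (0:ℝ) T = Icc t T := by
    ext s
    simp only [mem_inter_iff, mem_Ici, mem_Icc]
    constructor
    · rintro ⟨h1, _, h3⟩; exact ⟨h1, h3⟩
    · rintro ⟨h1, h2⟩; exact ⟨h1, ht.trans h1, h2⟩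
  rw [h2]

lemma restrictR {T : ℝ} (s : ℝ) (hs : s ≤ T) (f : ℝ → ℝ≥0∞) :
    ∫⁻ t in Icc (0:ℝ) s, f t = ∫⁻ t in Icc (0:ℝ) T, (if t ≤ s then f t else 0) := by
  have h1 : (fun t => if t ≤ s then f t else 0) = (Iic s).indicator f := by
    ext t; simp [Set.indicator_apply, mem_Iic]
  rw [h1, lintegral_indicator measurableSet_Iic,
    Measure.restrict_restrict measurableSet_Iic]
  have h2 : Iic s ∩ Icc (0:ℝ) T = Icc (0:ℝ) s := by
    ext t
    simp only [mem_inter_iff, mem_Iic, mem_Icc]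
    constructor
    · rintro ⟨h1, h2, _⟩; exact ⟨h2, h1⟩
    · rintro ⟨h1, h2⟩; exact ⟨h2, h1, h2.trans hs⟩
  rw [h2]

lemma lint_ite {α : Type*} [MeasurableSpace α] (μ : Measure α) (c : Prop) [Decidable c]
    (f : α → ℝ≥0∞) :
    ∫⁻ x, (if c then f x else 0) ∂μ = if c then ∫⁻ x, f x ∂μ else 0 := by
  split_ifs <;> simp

set_option maxHeartbeats 1000000 in
/-- Estimate (2.17): if `(y,z)` has the M-solution domination property
`E ∫₀ˢ |z(s,t)|² dt ≤ E |y(s)|²` for a.e. `s ∈ [0,T]`, then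
`∫₀ᵀ e^{βt} E[ ∫ₜᵀ |y(s)|² ds + (∫ₜᵀ |z(s,t)| ds)² ] dt
  ≤ (2/β) ∫₀ᵀ e^{βt} E|y(t)|² dt`. -/
theorem stmt_1 {Ω : Type*} [MeasurableSpace Ω] (P : Measure Ω) [IsProbabilityMeasure P]
    (T β : ℝ) (hT : 0 < T) (hβ : 0 < β) (m : ℕ) (hm : 0 < m)
    (y : ℝ → Ω → EuclideanSpace ℝ (Fin m)) (z : ℝ → ℝ → Ω → EuclideanSpace ℝ (Fin m))
    (hy : Measurable (Function.uncurry y))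
    (hz : Measurable fun p : ℝ × ℝ × Ω => z p.1 p.2.1 p.2.2)
    (hM : ∀ᵐ s ∂(volume.restrict (Icc (0:ℝ) T)),
      (∫⁻ ω, (∫⁻ t in Icc (0:ℝ) s, ENNReal.ofReal (‖z s t ω‖ ^ 2)) ∂P)
        ≤ ∫⁻ ω, ENNReal.ofReal (‖y s ω‖ ^ 2) ∂P) :
    (∫⁻ t in Icc (0:ℝ) T, ENNReal.ofReal (Real.exp (β * t)) *
        ∫⁻ ω, ((∫⁻ s in Icc t T, ENNReal.ofReal (‖y s ω‖ ^ 2)) +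
          (∫⁻ s in Icc t T, ENNReal.ofReal ‖z s t ω‖) ^ 2) ∂P)
      ≤ ENNReal.ofReal (2 / β) *
        ∫⁻ t in Icc (0:ℝ) T, ENNReal.ofReal (Real.exp (β * t)) *
          ∫⁻ ω, ENNReal.ofReal (‖y t ω‖ ^ 2) ∂P := by
  -- measurability building blocks
  have hy1 : Measurable fun p : ℝ × Ω => ENNReal.ofReal (‖y p.1 p.2‖ ^ 2) :=
    ENNReal.measurable_ofReal.comp (hy.norm.pow_const 2)
  have hyF : Measurable fun s : ℝ => ∫⁻ ω, ENNReal.ofReal (‖y s ω‖ ^ 2) ∂P :=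
    hy1.lintegral_prod_right'
  have hyG1 : Measurable fun q : (ℝ × Ω) × ℝ => ENNReal.ofReal (‖y q.2 q.1.2‖ ^ 2) :=
    ENNReal.measurable_ofReal.comp
      (((hy.comp (measurable_snd.prodMk measurable_fst.snd)).norm).pow_const 2)
  have hzG2 : Measurable fun q : (ℝ × Ω) × ℝ => ENNReal.ofReal ‖z q.2 q.1.1 q.1.2‖ :=
    ENNReal.measurable_ofReal.comp
      ((hz.comp (measurable_snd.prodMk (measurable_fst.fst.prodMk measurable_fst.snd))).norm)
  have hzD : Measurable fun p : ℝ × ℝ => ∫⁻ ω, ENNReal.ofReal (‖z p.1 p.2 ω‖ ^ 2) ∂P := by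
    have h : Measurable fun q : (ℝ × ℝ) × Ω => ENNReal.ofReal (‖z q.1.1 q.1.2 q.2‖ ^ 2) :=
      ENNReal.measurable_ofReal.comp
        (((hz.comp ((measurable_fst.fst).prodMk
          ((measurable_fst.snd).prodMk measurable_snd))).norm).pow_const 2)
    exact h.lintegral_prod_right'
  have heM : Measurable fun t : ℝ => ENNReal.ofReal (Real.exp (β * t)) :=
    ENNReal.measurable_ofReal.comp (Real.measurable_exp.comp (measurable_id.const_mul β))
  have hG1 : Measurable fun p : ℝ × Ω =>
      ∫⁻ s in Icc (0:ℝ) T, (if p.1 ≤ s then ENNReal.ofReal (‖y s p.2‖ ^ 2) else 0) := by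
    apply Measurable.lintegral_prod_right'
      (f := fun q : (ℝ × Ω) × ℝ => if q.1.1 ≤ q.2 then ENNReal.ofReal (‖y q.2 q.1.2‖ ^ 2) else 0)
    exact Measurable.ite (measurableSet_le measurable_fst.fst measurable_snd) hyG1 measurable_const
  have hG2 : Measurable fun p : ℝ × Ω =>
      ∫⁻ s in Icc (0:ℝ) T, (if p.1 ≤ s then ENNReal.ofReal ‖z s p.1 p.2‖ else 0) := by
    apply Measurable.lintegral_prod_right'
      (f := fun q : (ℝ × Ω) × ℝ => if q.1.1 ≤ q.2 then ENNReal.ofReal ‖z q.2 q.1.1 q.1.2‖ else 0)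
    exact Measurable.ite (measurableSet_le measurable_fst.fst measurable_snd) hzG2 measurable_const
  have hΦ1 : Measurable fun t : ℝ => ∫⁻ ω, ENNReal.ofReal (Real.exp (β * t)) *
      (∫⁻ s in Icc (0:ℝ) T, (if t ≤ s then ENNReal.ofReal (‖y s ω‖ ^ 2) else 0)) ∂P := by
    apply Measurable.lintegral_prod_right'
      (f := fun p : ℝ × Ω => ENNReal.ofReal (Real.exp (β * p.1)) *
        (∫⁻ s in Icc (0:ℝ) T, (if p.1 ≤ s then ENNReal.ofReal (‖y s p.2‖ ^ 2) else 0)))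
    exact (ENNReal.measurable_ofReal.comp
      (Real.measurable_exp.comp (measurable_fst.const_mul β))).mul hG1
  -- Step 1: split the left-hand side into the y-part and the z-part
  have hsplit : (∫⁻ t in Icc (0:ℝ) T, ENNReal.ofReal (Real.exp (β * t)) *
        ∫⁻ ω, ((∫⁻ s in Icc t T, ENNReal.ofReal (‖y s ω‖ ^ 2)) +
          (∫⁻ s in Icc t T, ENNReal.ofReal ‖z s t ω‖) ^ 2) ∂P)
      = (∫⁻ t in Icc (0:ℝ) T, ∫⁻ ω, ENNReal.ofReal (Real.exp (β * t)) *
          (∫⁻ s in Icc (0:ℝ) T, (if t ≤ s then ENNReal.ofReal (‖y s ω‖ ^ 2) else 0)) ∂P)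
        + (∫⁻ t in Icc (0:ℝ) T, ∫⁻ ω, ENNReal.ofReal (Real.exp (β * t)) *
          (∫⁻ s in Icc (0:ℝ) T, (if t ≤ s then ENNReal.ofReal ‖z s t ω‖ else 0)) ^ 2 ∂P) := by
    rw [← lintegral_add_left hΦ1]
    refine setLIntegral_congr_fun measurableSet_Icc (fun t ht => ?_)
    calc ENNReal.ofReal (Real.exp (β * t)) * ∫⁻ ω, ((∫⁻ s in Icc t T, ENNReal.ofReal (‖y s ω‖ ^ 2)) +
          (∫⁻ s in Icc t T, ENNReal.ofReal ‖z s t ω‖) ^ 2) ∂P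
        = ENNReal.ofReal (Real.exp (β * t)) *
            ∫⁻ ω, ((∫⁻ s in Icc (0:ℝ) T, (if t ≤ s then ENNReal.ofReal (‖y s ω‖ ^ 2) else 0)) +
              (∫⁻ s in Icc (0:ℝ) T, (if t ≤ s then ENNReal.ofReal ‖z s t ω‖ else 0)) ^ 2) ∂P := by
          congr 1
          exact lintegral_congr fun ω => by rw [restrictL t ht.1, restrictL t ht.1]
      _ = ENNReal.ofReal (Real.exp (β * t)) *
            ((∫⁻ ω, (∫⁻ s in Icc (0:ℝ) T, (if t ≤ s then ENNReal.ofReal (‖y s ω‖ ^ 2) else 0)) ∂P) +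
             ∫⁻ ω, (∫⁻ s in Icc (0:ℝ) T, (if t ≤ s then ENNReal.ofReal ‖z s t ω‖ else 0)) ^ 2 ∂P) := by
          congr 1
          exact lintegral_add_left (hG1.comp measurable_prodMk_left) _
      _ = _ := by
          rw [mul_add, lintegral_const_mul' _ _ ENNReal.ofReal_ne_top,
            lintegral_const_mul' _ _ ENNReal.ofReal_ne_top]
  rw [hsplit]

  -- Term A: the y-part
  have hA : (∫⁻ t in Icc (0:ℝ) T, ∫⁻ ω, ENNReal.ofReal (Real.exp (β * t)) *
          (∫⁻ s in Icc (0:ℝ) T, (if t ≤ s then ENNReal.ofReal (‖y s ω‖ ^ 2) else 0)) ∂P)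
      ≤ ENNReal.ofReal (1/β) * ∫⁻ t in Icc (0:ℝ) T, ENNReal.ofReal (Real.exp (β * t)) *
          ∫⁻ ω, ENNReal.ofReal (‖y t ω‖ ^ 2) ∂P := by
    have step1 : ∀ t : ℝ, (∫⁻ ω, ENNReal.ofReal (Real.exp (β * t)) *
          (∫⁻ s in Icc (0:ℝ) T, (if t ≤ s then ENNReal.ofReal (‖y s ω‖ ^ 2) else 0)) ∂P)
        = ∫⁻ s in Icc (0:ℝ) T, (if t ≤ s then ENNReal.ofReal (Real.exp (β * t)) *
            ∫⁻ ω, ENNReal.ofReal (‖y s ω‖ ^ 2) ∂P else 0) := by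
      intro t
      rw [lintegral_const_mul' _ _ ENNReal.ofReal_ne_top]
      have hsw := lintegral_lintegral_swap (μ := P) (ν := volume.restrict (Icc (0:ℝ) T))
        (f := fun (ω : Ω) (s : ℝ) => if t ≤ s then ENNReal.ofReal (‖y s ω‖ ^ 2) else 0)
        (Measurable.aemeasurable (Measurable.ite
          (measurableSet_le measurable_const measurable_snd)
          (ENNReal.measurable_ofReal.comp
            (((hy.comp (measurable_snd.prodMk measurable_fst)).norm).pow_const 2))
          measurable_const))
      rw [hsw, ← lintegral_const_mul' _ _ ENNReal.ofReal_ne_top]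
      refine lintegral_congr fun s => ?_
      rw [lint_ite, mul_ite, mul_zero]
    calc (∫⁻ t in Icc (0:ℝ) T, ∫⁻ ω, ENNReal.ofReal (Real.exp (β * t)) *
          (∫⁻ s in Icc (0:ℝ) T, (if t ≤ s then ENNReal.ofReal (‖y s ω‖ ^ 2) else 0)) ∂P)
        = ∫⁻ t in Icc (0:ℝ) T, ∫⁻ s in Icc (0:ℝ) T,
            (if t ≤ s then ENNReal.ofReal (Real.exp (β * t)) *
              ∫⁻ ω, ENNReal.ofReal (‖y s ω‖ ^ 2) ∂P else 0) :=
          lintegral_congr fun t => step1 t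
      _ = ∫⁻ s in Icc (0:ℝ) T, ∫⁻ t in Icc (0:ℝ) T,
            (if t ≤ s then ENNReal.ofReal (Real.exp (β * t)) *
              ∫⁻ ω, ENNReal.ofReal (‖y s ω‖ ^ 2) ∂P else 0) := by
          refine lintegral_lintegral_swap (Measurable.aemeasurable ?_)
          exact Measurable.ite (measurableSet_le measurable_fst measurable_snd)
            ((heM.comp measurable_fst).mul (hyF.comp measurable_snd)) measurable_const
      _ = ∫⁻ s in Icc (0:ℝ) T,
            (∫⁻ t in Icc (0:ℝ) T, (if t ≤ s then ENNReal.ofReal (Real.exp (β * t)) else 0)) *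
              ∫⁻ ω, ENNReal.ofReal (‖y s ω‖ ^ 2) ∂P := by
          refine lintegral_congr fun s => ?_
          rw [← lintegral_mul_const (f := fun t : ℝ =>
              if t ≤ s then ENNReal.ofReal (Real.exp (β * t)) else 0) _
            (Measurable.ite (measurableSet_le measurable_id measurable_const) heM
              measurable_const)]
          exact lintegral_congr fun t => by rw [ite_mul, zero_mul]
      _ ≤ ∫⁻ s in Icc (0:ℝ) T,
            (ENNReal.ofReal (1/β) * ENNReal.ofReal (Real.exp (β * s))) *
              ∫⁻ ω, ENNReal.ofReal (‖y s ω‖ ^ 2) ∂P := by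
          refine lintegral_mono_ae ((ae_restrict_mem measurableSet_Icc).mono fun s hs => ?_)
          refine mul_le_mul_left ?_ _
          rw [← restrictR s hs.2, lintExp β 0 s hβ.ne' hs.1,
            ← ENNReal.ofReal_mul (by positivity)]
          apply ENNReal.ofReal_le_ofReal
          rw [mul_zero, Real.exp_zero]
          have h1 : 1/β * Real.exp (β * s) = Real.exp (β * s) / β := by ring
          rw [h1]
          gcongr
          · linarith [Real.exp_pos (β * s)]
      _ = ENNReal.ofReal (1/β) * ∫⁻ s in Icc (0:ℝ) T, ENNReal.ofReal (Real.exp (β * s)) *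
            ∫⁻ ω, ENNReal.ofReal (‖y s ω‖ ^ 2) ∂P := by
          rw [← lintegral_const_mul' _ _ ENNReal.ofReal_ne_top]
          exact lintegral_congr fun s => by rw [mul_assoc]

  -- pointwise Cauchy-Schwarz estimate for the z-part
  have hCS : ∀ t ∈ Icc (0:ℝ) T, ∀ ω : Ω,
      ENNReal.ofReal (Real.exp (β * t)) *
          (∫⁻ s in Icc (0:ℝ) T, (if t ≤ s then ENNReal.ofReal ‖z s t ω‖ else 0)) ^ 2
        ≤ ENNReal.ofReal (1/β) * ∫⁻ s in Icc (0:ℝ) T,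
            (if t ≤ s then ENNReal.ofReal (Real.exp (β * s)) *
              ENNReal.ofReal (‖z s t ω‖ ^ 2) else 0) := by
    intro t ht ω
    have hfm : Measurable fun s : ℝ =>
        if t ≤ s then ENNReal.ofReal (Real.exp (-(β/2) * s)) else 0 :=
      Measurable.ite (measurableSet_le measurable_const measurable_id)
        (ENNReal.measurable_ofReal.comp
          (Real.measurable_exp.comp (measurable_id.const_mul _))) measurable_const
    have hzc0 : Measurable fun s : ℝ => (s, t, ω) := measurable_id.prodMk measurable_const
    have hzc : Measurable fun s : ℝ => z s t ω := hz.comp hzc0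
    have hzs : Measurable fun s : ℝ => ENNReal.ofReal ‖z s t ω‖ :=
      ENNReal.measurable_ofReal.comp hzc.norm
    have hgm : Measurable fun s : ℝ =>
        if t ≤ s then ENNReal.ofReal (Real.exp ((β/2) * s)) * ENNReal.ofReal ‖z s t ω‖ else 0 :=
      Measurable.ite (measurableSet_le measurable_const measurable_id)
        ((ENNReal.measurable_ofReal.comp
          (Real.measurable_exp.comp (measurable_id.const_mul _))).mul hzs) measurable_const
    have key := lintCS (volume.restrict (Icc (0:ℝ) T)) _ _ hfm.aemeasurable hgm.aemeasurable
    have hfg : ∀ s : ℝ, (if t ≤ s then ENNReal.ofReal ‖z s t ω‖ else 0)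
        = (if t ≤ s then ENNReal.ofReal (Real.exp (-(β/2) * s)) else 0) *
          (if t ≤ s then ENNReal.ofReal (Real.exp ((β/2) * s)) *
            ENNReal.ofReal ‖z s t ω‖ else 0) := by
      intro s
      by_cases h : t ≤ s
      · rw [if_pos h, if_pos h, if_pos h, ← mul_assoc,
          ← ENNReal.ofReal_mul (Real.exp_nonneg _), ← Real.exp_add,
          show -(β/2) * s + β/2 * s = 0 by ring, Real.exp_zero,
          ENNReal.ofReal_one, one_mul]
      · rw [if_neg h, if_neg h, if_neg h, zero_mul]
    have hf2 : (∫⁻ s in Icc (0:ℝ) T,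
          (if t ≤ s then ENNReal.ofReal (Real.exp (-(β/2) * s)) else 0) ^ 2)
        ≤ ENNReal.ofReal (Real.exp (-β * t) / β) := by
      have h1 : ∀ s : ℝ, (if t ≤ s then ENNReal.ofReal (Real.exp (-(β/2) * s)) else 0) ^ 2
          = (if t ≤ s then ENNReal.ofReal (Real.exp (-β * s)) else 0) := by
        intro s
        by_cases h : t ≤ s
        · rw [if_pos h, if_pos h, ← ENNReal.ofReal_pow (Real.exp_nonneg _), pow_two,
            ← Real.exp_add, show -(β/2) * s + -(β/2) * s = -β * s by ring]
        · rw [if_neg h, if_neg h]; exact zero_pow two_ne_zero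
      rw [lintegral_congr h1, ← restrictL t ht.1,
        lintExp (-β) t T (neg_ne_zero.mpr hβ.ne') ht.2]
      apply ENNReal.ofReal_le_ofReal
      rw [div_neg, ← neg_div, neg_sub]
      have h2 := Real.exp_pos (-β * T)
      gcongr
      linarith
    have hg2 : ∀ s : ℝ, (if t ≤ s then ENNReal.ofReal (Real.exp ((β/2) * s)) *
          ENNReal.ofReal ‖z s t ω‖ else 0) ^ 2
        = (if t ≤ s then ENNReal.ofReal (Real.exp (β * s)) *
            ENNReal.ofReal (‖z s t ω‖ ^ 2) else 0) := by
      intro s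
      by_cases h : t ≤ s
      · rw [if_pos h, if_pos h, mul_pow, ← ENNReal.ofReal_pow (Real.exp_nonneg _),
          ← ENNReal.ofReal_pow (norm_nonneg _), pow_two (Real.exp _), ← Real.exp_add,
          show β/2 * s + β/2 * s = β * s by ring]
      · rw [if_neg h, if_neg h]; exact zero_pow two_ne_zero
    calc ENNReal.ofReal (Real.exp (β * t)) *
          (∫⁻ s in Icc (0:ℝ) T, (if t ≤ s then ENNReal.ofReal ‖z s t ω‖ else 0)) ^ 2
        = ENNReal.ofReal (Real.exp (β * t)) *
          (∫⁻ s in Icc (0:ℝ) T,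
            (if t ≤ s then ENNReal.ofReal (Real.exp (-(β/2) * s)) else 0) *
            (if t ≤ s then ENNReal.ofReal (Real.exp ((β/2) * s)) *
              ENNReal.ofReal ‖z s t ω‖ else 0)) ^ 2 := by
          rw [lintegral_congr hfg]
      _ ≤ ENNReal.ofReal (Real.exp (β * t)) *
          ((∫⁻ s in Icc (0:ℝ) T,
            (if t ≤ s then ENNReal.ofReal (Real.exp (-(β/2) * s)) else 0) ^ 2) *
           (∫⁻ s in Icc (0:ℝ) T,
            (if t ≤ s then ENNReal.ofReal (Real.exp ((β/2) * s)) *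
              ENNReal.ofReal ‖z s t ω‖ else 0) ^ 2)) :=
          mul_le_mul_right key _
      _ ≤ ENNReal.ofReal (Real.exp (β * t)) *
          (ENNReal.ofReal (Real.exp (-β * t) / β) *
           ∫⁻ s in Icc (0:ℝ) T, (if t ≤ s then ENNReal.ofReal (Real.exp (β * s)) *
              ENNReal.ofReal (‖z s t ω‖ ^ 2) else 0)) :=
          mul_le_mul_right (mul_le_mul' hf2 (le_of_eq (lintegral_congr hg2))) _
      _ = ENNReal.ofReal (1/β) * ∫⁻ s in Icc (0:ℝ) T,
            (if t ≤ s then ENNReal.ofReal (Real.exp (β * s)) *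
              ENNReal.ofReal (‖z s t ω‖ ^ 2) else 0) := by
          rw [← mul_assoc]
          congr 1
          rw [← ENNReal.ofReal_mul (Real.exp_nonneg _)]
          congr 1
          rw [neg_mul, Real.exp_neg]
          field_simp
  -- Term B: the z-part
  have hB : (∫⁻ t in Icc (0:ℝ) T, ∫⁻ ω, ENNReal.ofReal (Real.exp (β * t)) *
          (∫⁻ s in Icc (0:ℝ) T, (if t ≤ s then ENNReal.ofReal ‖z s t ω‖ else 0)) ^ 2 ∂P)
      ≤ ENNReal.ofReal (1/β) * ∫⁻ t in Icc (0:ℝ) T, ENNReal.ofReal (Real.exp (β * t)) *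
          ∫⁻ ω, ENNReal.ofReal (‖y t ω‖ ^ 2) ∂P := by
    calc (∫⁻ t in Icc (0:ℝ) T, ∫⁻ ω, ENNReal.ofReal (Real.exp (β * t)) *
          (∫⁻ s in Icc (0:ℝ) T, (if t ≤ s then ENNReal.ofReal ‖z s t ω‖ else 0)) ^ 2 ∂P)
        ≤ ∫⁻ t in Icc (0:ℝ) T, ∫⁻ ω, ENNReal.ofReal (1/β) *
            (∫⁻ s in Icc (0:ℝ) T, (if t ≤ s then ENNReal.ofReal (Real.exp (β * s)) *
              ENNReal.ofReal (‖z s t ω‖ ^ 2) else 0)) ∂P := by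
          refine lintegral_mono_ae ((ae_restrict_mem measurableSet_Icc).mono fun t ht => ?_)
          exact lintegral_mono fun ω => hCS t ht ω
      _ = ENNReal.ofReal (1/β) * ∫⁻ t in Icc (0:ℝ) T, ∫⁻ ω,
            (∫⁻ s in Icc (0:ℝ) T, (if t ≤ s then ENNReal.ofReal (Real.exp (β * s)) *
              ENNReal.ofReal (‖z s t ω‖ ^ 2) else 0)) ∂P := by
          rw [← lintegral_const_mul' _ _ ENNReal.ofReal_ne_top]
          exact lintegral_congr fun t => lintegral_const_mul' _ _ ENNReal.ofReal_ne_top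
      _ = ENNReal.ofReal (1/β) * ∫⁻ t in Icc (0:ℝ) T, ∫⁻ s in Icc (0:ℝ) T,
            (if t ≤ s then ENNReal.ofReal (Real.exp (β * s)) *
              ∫⁻ ω, ENNReal.ofReal (‖z s t ω‖ ^ 2) ∂P else 0) := by
          refine congrArg (fun x => ENNReal.ofReal (1/β) * x) ?_
          refine lintegral_congr fun t => ?_
          have hz1 : Measurable fun p : Ω × ℝ => (p.2, t, p.1) :=
            measurable_snd.prodMk (measurable_const.prodMk measurable_fst)
          have hz2 : Measurable fun p : Ω × ℝ => z p.2 t p.1 := hz.comp hz1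
          have hz3 : Measurable fun p : Ω × ℝ => ENNReal.ofReal (‖z p.2 t p.1‖ ^ 2) :=
            ENNReal.measurable_ofReal.comp (hz2.norm.pow_const 2)
          have hsw := lintegral_lintegral_swap (μ := P) (ν := volume.restrict (Icc (0:ℝ) T))
            (f := fun (ω : Ω) (s : ℝ) => if t ≤ s then ENNReal.ofReal (Real.exp (β * s)) *
              ENNReal.ofReal (‖z s t ω‖ ^ 2) else 0)
            (Measurable.aemeasurable (Measurable.ite
              (measurableSet_le measurable_const measurable_snd)
              ((heM.comp measurable_snd).mul hz3) measurable_const))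
          rw [hsw]
          refine lintegral_congr fun s => ?_
          rw [lint_ite]
          by_cases h : t ≤ s
          · rw [if_pos h, if_pos h, lintegral_const_mul' _ _ ENNReal.ofReal_ne_top]
          · rw [if_neg h, if_neg h]
      _ = ENNReal.ofReal (1/β) * ∫⁻ s in Icc (0:ℝ) T, ∫⁻ t in Icc (0:ℝ) T,
            (if t ≤ s then ENNReal.ofReal (Real.exp (β * s)) *
              ∫⁻ ω, ENNReal.ofReal (‖z s t ω‖ ^ 2) ∂P else 0) := by
          have h1 : Measurable fun q : (ℝ × ℝ) × Ω => (q.1.2, q.1.1, q.2) :=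
            (measurable_fst.snd).prodMk ((measurable_fst.fst).prodMk measurable_snd)
          have h1' : Measurable fun q : (ℝ × ℝ) × Ω => z q.1.2 q.1.1 q.2 := hz.comp h1
          have h1'' : Measurable fun q : (ℝ × ℝ) × Ω =>
              ENNReal.ofReal (‖z q.1.2 q.1.1 q.2‖ ^ 2) :=
            ENNReal.measurable_ofReal.comp (h1'.norm.pow_const 2)
          have h2 : Measurable fun q : ℝ × ℝ => ∫⁻ ω, ENNReal.ofReal (‖z q.2 q.1 ω‖ ^ 2) ∂P :=
            h1''.lintegral_prod_right'
          have hsw2 := lintegral_lintegral_swap (μ := volume.restrict (Icc (0:ℝ) T))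
            (ν := volume.restrict (Icc (0:ℝ) T))
            (f := fun (t s : ℝ) => if t ≤ s then ENNReal.ofReal (Real.exp (β * s)) *
              ∫⁻ ω, ENNReal.ofReal (‖z s t ω‖ ^ 2) ∂P else 0)
            (Measurable.aemeasurable (Measurable.ite
              (measurableSet_le measurable_fst measurable_snd)
              ((heM.comp measurable_snd).mul h2) measurable_const))
          exact congrArg (fun x => ENNReal.ofReal (1/β) * x) hsw2
      _ = ENNReal.ofReal (1/β) * ∫⁻ s in Icc (0:ℝ) T, ENNReal.ofReal (Real.exp (β * s)) *
            ∫⁻ t in Icc (0:ℝ) s, ∫⁻ ω, ENNReal.ofReal (‖z s t ω‖ ^ 2) ∂P := by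
          refine congrArg (fun x => ENNReal.ofReal (1/β) * x) ?_
          refine setLIntegral_congr_fun measurableSet_Icc
            (fun s hs => ?_)
          calc (∫⁻ t in Icc (0:ℝ) T, (if t ≤ s then ENNReal.ofReal (Real.exp (β * s)) *
                ∫⁻ ω, ENNReal.ofReal (‖z s t ω‖ ^ 2) ∂P else 0))
              = ∫⁻ t in Icc (0:ℝ) T, ENNReal.ofReal (Real.exp (β * s)) *
                (if t ≤ s then ∫⁻ ω, ENNReal.ofReal (‖z s t ω‖ ^ 2) ∂P else 0) :=
                lintegral_congr fun t => by rw [mul_ite, mul_zero]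
            _ = ENNReal.ofReal (Real.exp (β * s)) * ∫⁻ t in Icc (0:ℝ) T,
                (if t ≤ s then ∫⁻ ω, ENNReal.ofReal (‖z s t ω‖ ^ 2) ∂P else 0) :=
                lintegral_const_mul' _ _ ENNReal.ofReal_ne_top
            _ = ENNReal.ofReal (Real.exp (β * s)) *
                ∫⁻ t in Icc (0:ℝ) s, ∫⁻ ω, ENNReal.ofReal (‖z s t ω‖ ^ 2) ∂P := by
                rw [← restrictR s hs.2]
      _ ≤ ENNReal.ofReal (1/β) * ∫⁻ s in Icc (0:ℝ) T, ENNReal.ofReal (Real.exp (β * s)) *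
            ∫⁻ ω, ENNReal.ofReal (‖y s ω‖ ^ 2) ∂P := by
          refine mul_le_mul_right ?_ _
          refine lintegral_mono_ae ?_
          filter_upwards [hM, ae_restrict_mem measurableSet_Icc] with s hs hsI
          refine mul_le_mul_right ?_ _
          have hswap : (∫⁻ t in Icc (0:ℝ) s, ∫⁻ ω, ENNReal.ofReal (‖z s t ω‖ ^ 2) ∂P)
              = ∫⁻ ω, (∫⁻ t in Icc (0:ℝ) s, ENNReal.ofReal (‖z s t ω‖ ^ 2)) ∂P := by
            refine lintegral_lintegral_swap (Measurable.aemeasurable ?_)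
            have hz1 : Measurable fun p : ℝ × Ω => (s, p.1, p.2) :=
              measurable_const.prodMk (measurable_fst.prodMk measurable_snd)
            have hz2 : Measurable fun p : ℝ × Ω => z s p.1 p.2 := hz.comp hz1
            exact ENNReal.measurable_ofReal.comp (hz2.norm.pow_const 2)
          rw [hswap]
          exact hs
  calc _ ≤ ENNReal.ofReal (1/β) * (∫⁻ t in Icc (0:ℝ) T, ENNReal.ofReal (Real.exp (β * t)) *
          ∫⁻ ω, ENNReal.ofReal (‖y t ω‖ ^ 2) ∂P)
        + ENNReal.ofReal (1/β) * (∫⁻ t in Icc (0:ℝ) T, ENNReal.ofReal (Real.exp (β * t)) *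
          ∫⁻ ω, ENNReal.ofReal (‖y t ω‖ ^ 2) ∂P) := add_le_add hA hB
    _ = ENNReal.ofReal (2/β) * ∫⁻ t in Icc (0:ℝ) T, ENNReal.ofReal (Real.exp (β * t)) *
          ∫⁻ ω, ENNReal.ofReal (‖y t ω‖ ^ 2) ∂P := by
        rw [← add_mul, ← ENNReal.ofReal_add (by positivity) (by positivity)]
        congr 2
        ring
end

section
/- Let T > 0 and m a positive integer. Let A : [0,T] × [0,T] → ℝ^{m×m} be measurable and bounded, and let ψ, α ∈ L²(0,T;ℝ^m). Suppose Y ∈ L²(0,T;ℝ^m) satisfies Y(t) = ψ(t) + ∫ₜᵀ A(t,s) Y(s) ds for almost every t ∈ [0,T], and ξ ∈ L²(0,T;ℝ^m) satisfies ξ(t) = α(t) + ∫₀ᵗ A(s,t)ᵀ ξ(s) ds for almost every t ∈ [0,T]. Then ∫₀ᵀ ⟨ψ(t), ξ(t)⟩ dt = ∫₀ᵀ ⟨Y(t), α(t)⟩ dt. -/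
open MeasureTheory Set

set_option maxHeartbeats 1000000 in
/-- Deterministic duality principle: if `Y(t) = ψ(t) + ∫ₜᵀ A(t,s) Y(s) ds` and
`ξ(t) = α(t) + ∫₀ᵗ A(s,t)ᵀ ξ(s) ds` (a.e. on `[0,T]`), then
`∫₀ᵀ ⟨ψ(t), ξ(t)⟩ dt = ∫₀ᵀ ⟨Y(t), α(t)⟩ dt`. -/
theorem stmt_6 (m : ℕ) (hm : 0 < m) (T : ℝ) (hT : 0 < T)
    (A : ℝ → ℝ → (EuclideanSpace ℝ (Fin m) →L[ℝ] EuclideanSpace ℝ (Fin m)))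
    (hAmeas : StronglyMeasurable (Function.uncurry A))
    (L : ℝ) (hAbd : ∀ t s, ‖A t s‖ ≤ L)
    (ψ α Y ξ : ℝ → EuclideanSpace ℝ (Fin m))
    (hψ : MemLp ψ 2 (volume.restrict (Icc 0 T)))
    (hα : MemLp α 2 (volume.restrict (Icc 0 T)))
    (hY : MemLp Y 2 (volume.restrict (Icc 0 T)))
    (hξ : MemLp ξ 2 (volume.restrict (Icc 0 T)))
    (hYeq : ∀ᵐ t ∂(volume.restrict (Icc (0:ℝ) T)),
      Y t = ψ t + ∫ s in Icc t T, A t s (Y s))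
    (hξeq : ∀ᵐ t ∂(volume.restrict (Icc (0:ℝ) T)),
      ξ t = α t + ∫ s in Icc (0:ℝ) t, ContinuousLinearMap.adjoint (A s t) (ξ s)) :
    (∫ t in Icc (0:ℝ) T, (inner ℝ (ψ t) (ξ t) : ℝ))
      = ∫ t in Icc (0:ℝ) T, (inner ℝ (Y t) (α t) : ℝ) := by
  set μ : Measure ℝ := volume.restrict (Icc (0:ℝ) T) with hμdef
  haveI : IsFiniteMeasure μ := ⟨by
    rw [hμdef, Measure.restrict_apply_univ]; exact measure_Icc_lt_top⟩
  have hL0 : (0:ℝ) ≤ L := (norm_nonneg _).trans (hAbd 0 0)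
  have hYi : Integrable Y μ := hY.integrable one_le_two
  have hξi : Integrable ξ μ := hξ.integrable one_le_two
  -- inner products of L² functions are integrable
  have innInt : ∀ (f g : ℝ → EuclideanSpace ℝ (Fin m)), MemLp f 2 μ → MemLp g 2 μ →
      Integrable (fun t => (inner ℝ (f t) (g t) : ℝ)) μ := by
    intro f g hf hg
    have h1 : MemLp ((fun t => ‖f t‖) • (fun t => ‖g t‖)) 1 μ :=
      (hg.norm).smul (hf.norm) (hpqr := ⟨by norm_num [ENNReal.inv_two_add_inv_two]⟩)
    have h2 : Integrable (fun t => ‖f t‖ * ‖g t‖) μ := by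
      have := memLp_one_iff_integrable.mp h1
      simpa [Pi.smul_apply, smul_eq_mul, Pi.mul_def] using this
    exact h2.mono' (hf.1.inner hg.1) (Filter.Eventually.of_forall fun t => by
      exact norm_inner_le_norm (f t) (g t))
  have hψξ := innInt ψ ξ hψ hξ
  have hYξ := innInt Y ξ hY hξ
  have hYα := innInt Y α hY hα
  -- the kernel
  set Φ : ℝ × ℝ → ℝ := fun p =>
    indicator {q : ℝ × ℝ | q.1 ≤ q.2}
      (fun q => (inner ℝ (A q.1 q.2 (Y q.2)) (ξ q.1) : ℝ)) p with hΦdef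
  have happ : AEStronglyMeasurable (fun p : ℝ × ℝ => A p.1 p.2 (Y p.2)) (μ.prod μ) := by
    have hc : Continuous (fun q :
        (EuclideanSpace ℝ (Fin m) →L[ℝ] EuclideanSpace ℝ (Fin m)) × EuclideanSpace ℝ (Fin m)
        => q.1 q.2) := isBoundedBilinearMap_apply.continuous
    have hYm : AEStronglyMeasurable (fun p : ℝ × ℝ => Y p.2) (μ.prod μ) := hY.1.comp_snd
    exact hc.comp_aestronglyMeasurable (hAmeas.aestronglyMeasurable.prodMk hYm)
  have hξm : AEStronglyMeasurable (fun p : ℝ × ℝ => ξ p.1) (μ.prod μ) := hξ.1.comp_fst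
  have hGm : AEStronglyMeasurable
      (fun p : ℝ × ℝ => (inner ℝ (A p.1 p.2 (Y p.2)) (ξ p.1) : ℝ)) (μ.prod μ) := happ.inner hξm
  have hΦm : AEStronglyMeasurable Φ (μ.prod μ) :=
    hGm.indicator (measurableSet_le measurable_fst measurable_snd)
  have hdom : Integrable (fun p : ℝ × ℝ => (L * ‖ξ p.1‖) * ‖Y p.2‖) (μ.prod μ) :=
    (hξi.norm.const_mul L).mul_prod hYi.norm
  have hΦi : Integrable Φ (μ.prod μ) := by
    refine hdom.mono' hΦm (Filter.Eventually.of_forall fun p => ?_)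
    have hb : ‖(inner ℝ (A p.1 p.2 (Y p.2)) (ξ p.1) : ℝ)‖ ≤ (L * ‖ξ p.1‖) * ‖Y p.2‖ := by
      calc ‖(inner ℝ (A p.1 p.2 (Y p.2)) (ξ p.1) : ℝ)‖
          ≤ ‖A p.1 p.2 (Y p.2)‖ * ‖ξ p.1‖ := norm_inner_le_norm _ _
        _ ≤ (L * ‖Y p.2‖) * ‖ξ p.1‖ := by
            have := ((A p.1 p.2).le_opNorm (Y p.2)).trans
              (mul_le_mul_of_nonneg_right (hAbd p.1 p.2) (norm_nonneg _))
            exact mul_le_mul_of_nonneg_right this (norm_nonneg _)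
        _ = (L * ‖ξ p.1‖) * ‖Y p.2‖ := by ring
    calc ‖Φ p‖ ≤ ‖(inner ℝ (A p.1 p.2 (Y p.2)) (ξ p.1) : ℝ)‖ := by
          rw [hΦdef]; exact norm_indicator_le_norm_self _ p
      _ ≤ _ := hb
  -- B side
  have hB : ∀ᵐ t ∂μ, (inner ℝ (Y t) (ξ t) : ℝ) - inner ℝ (ψ t) (ξ t) = ∫ s, Φ (t, s) ∂μ := by
    filter_upwards [hYeq, ae_restrict_mem measurableSet_Icc] with t hYt ht
    have hrest : μ.restrict (Ici t) = volume.restrict (Icc t T) := by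
      rw [hμdef, Measure.restrict_restrict measurableSet_Ici]
      congr 1
      ext s
      simp only [mem_inter_iff, mem_Ici, mem_Icc]
      exact ⟨fun h => ⟨h.1, h.2.2⟩, fun h => ⟨h.1, ht.1.trans h.1, h.2⟩⟩
    have hAt : StronglyMeasurable (fun s => A t s) :=
      hAmeas.comp_measurable (measurable_const.prodMk measurable_id)
    have hmeas : AEStronglyMeasurable (fun s => A t s (Y s)) (μ.restrict (Ici t)) := by
      exact isBoundedBilinearMap_apply.continuous.comp_aestronglyMeasurable
        (hAt.aestronglyMeasurable.prodMk (hY.1.restrict))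
    have hint : Integrable (fun s => A t s (Y s)) (volume.restrict (Icc t T)) := by
      rw [← hrest]
      refine ((hYi.norm.const_mul L).restrict (s := Ici t)).mono' hmeas
        (Filter.Eventually.of_forall fun s => ?_)
      exact ((A t s).le_opNorm (Y s)).trans
        (mul_le_mul_of_nonneg_right (hAbd t s) (norm_nonneg _))
    have e1 : (inner ℝ (Y t) (ξ t) : ℝ) - inner ℝ (ψ t) (ξ t)
        = inner ℝ (∫ s in Icc t T, A t s (Y s)) (ξ t) := by
      rw [hYt, inner_add_left]; ring
    have e2 : (inner ℝ (∫ s in Icc t T, A t s (Y s)) (ξ t) : ℝ)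
        = ∫ s in Icc t T, (inner ℝ (A t s (Y s)) (ξ t) : ℝ) := by
      rw [real_inner_comm, ← integral_inner hint]
      exact integral_congr_ae (Filter.Eventually.of_forall fun s => real_inner_comm _ _)
    have e3 : (∫ s in Icc t T, (inner ℝ (A t s (Y s)) (ξ t) : ℝ)) = ∫ s, Φ (t, s) ∂μ := by
      have hfun : (fun s => Φ (t, s))
          = indicator (Ici t) (fun s => (inner ℝ (A t s (Y s)) (ξ t) : ℝ)) := by
        funext s
        simp [hΦdef, indicator_apply, mem_Ici, mem_setOf_eq]
      rw [hfun, integral_indicator measurableSet_Ici, hrest]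
    rw [e1, e2, e3]
  -- C side
  have hC : ∀ᵐ s ∂μ, (inner ℝ (Y s) (ξ s) : ℝ) - inner ℝ (Y s) (α s) = ∫ t, Φ (t, s) ∂μ := by
    filter_upwards [hξeq, ae_restrict_mem measurableSet_Icc] with s hξs hs
    have hrest : μ.restrict (Iic s) = volume.restrict (Icc (0:ℝ) s) := by
      rw [hμdef, Measure.restrict_restrict measurableSet_Iic]
      congr 1
      ext t
      simp only [mem_inter_iff, mem_Iic, mem_Icc]
      exact ⟨fun h => ⟨h.2.1, h.1⟩, fun h => ⟨h.2, h.1, h.2.trans hs.2⟩⟩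
    have hAs : StronglyMeasurable (fun t => A t s) :=
      hAmeas.comp_measurable (measurable_id.prodMk measurable_const)
    have hadj : StronglyMeasurable (fun t => ContinuousLinearMap.adjoint (A t s)) :=
      (ContinuousLinearMap.adjoint.continuous).comp_stronglyMeasurable hAs
    have hmeas : AEStronglyMeasurable
        (fun t => ContinuousLinearMap.adjoint (A t s) (ξ t)) (μ.restrict (Iic s)) := by
      exact isBoundedBilinearMap_apply.continuous.comp_aestronglyMeasurable
        (hadj.aestronglyMeasurable.prodMk (hξ.1.restrict))
    have hint : Integrable (fun t => ContinuousLinearMap.adjoint (A t s) (ξ t))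
        (volume.restrict (Icc (0:ℝ) s)) := by
      rw [← hrest]
      refine ((hξi.norm.const_mul L).restrict (s := Iic s)).mono' hmeas
        (Filter.Eventually.of_forall fun t => ?_)
      refine ((ContinuousLinearMap.adjoint (A t s)).le_opNorm (ξ t)).trans ?_
      have : ‖ContinuousLinearMap.adjoint (A t s)‖ ≤ L := by
        rw [ContinuousLinearMap.adjoint.norm_map]; exact hAbd t s
      exact mul_le_mul_of_nonneg_right this (norm_nonneg _)
    have e1 : (inner ℝ (Y s) (ξ s) : ℝ) - inner ℝ (Y s) (α s)
        = inner ℝ (Y s) (∫ t in Icc (0:ℝ) s, ContinuousLinearMap.adjoint (A t s) (ξ t)) := by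
      rw [hξs, inner_add_right]; ring
    have e2 : (inner ℝ (Y s) (∫ t in Icc (0:ℝ) s, ContinuousLinearMap.adjoint (A t s) (ξ t)) : ℝ)
        = ∫ t in Icc (0:ℝ) s, (inner ℝ (Y s) (ContinuousLinearMap.adjoint (A t s) (ξ t)) : ℝ) :=
      (integral_inner hint (Y s)).symm
    have e3 : (∫ t in Icc (0:ℝ) s, (inner ℝ (Y s) (ContinuousLinearMap.adjoint (A t s) (ξ t)) : ℝ))
        = ∫ t in Icc (0:ℝ) s, (inner ℝ (A t s (Y s)) (ξ t) : ℝ) :=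
      integral_congr_ae (Filter.Eventually.of_forall fun t =>
        ContinuousLinearMap.adjoint_inner_right _ _ _)
    have e4 : (∫ t in Icc (0:ℝ) s, (inner ℝ (A t s (Y s)) (ξ t) : ℝ)) = ∫ t, Φ (t, s) ∂μ := by
      have hfun : (fun t => Φ (t, s))
          = indicator (Iic s) (fun t => (inner ℝ (A t s (Y s)) (ξ t) : ℝ)) := by
        funext t
        simp [hΦdef, indicator_apply, mem_Iic, mem_setOf_eq]
      rw [hfun, integral_indicator measurableSet_Iic, hrest]
    rw [e1, e2, e3, e4]
  have hBint : ∫ t, ((inner ℝ (Y t) (ξ t) : ℝ) - inner ℝ (ψ t) (ξ t)) ∂μ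
      = ∫ t, ∫ s, Φ (t, s) ∂μ ∂μ := integral_congr_ae hB
  have hCint : ∫ s, ((inner ℝ (Y s) (ξ s) : ℝ) - inner ℝ (Y s) (α s)) ∂μ
      = ∫ s, ∫ t, Φ (t, s) ∂μ ∂μ := integral_congr_ae hC
  have hswap : ∫ t, ∫ s, Φ (t, s) ∂μ ∂μ = ∫ s, ∫ t, Φ (t, s) ∂μ ∂μ := by
    refine integral_integral_swap ?_
    exact hΦi
  rw [integral_sub hYξ hψξ] at hBint
  rw [integral_sub hYξ hYα] at hCint
  linarith [hBint, hCint, hswap]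
end
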